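/- Gradient of the Joule energy at strictly positive conductivities: assume b lies in the range of E and let μ ∈ ℝ^m with μ_e > 0 for every e. Let u ∈ ℝ^n be any solution of L[μ] u = b (the vector G u does not depend on the choice of such u). Then the real-valued function F(μ') = sup_{u' ∈ ℝ^n} ( bᵀu' − ½ u'ᵀ L[μ'] u' ), defined on the open positive orthant, is differentiable at μ, and its gradient at μ has entries ∂F/∂μ_e = −(w_e/2) ((G u)_e)² for e = 1,…,m. -/

import Mathlib

open Matrix BigOperators

set_option maxHeartbeats 2000000 in
/-- Gradient of the Joule energy at strictly positive conductivities: if `b` is in the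
range of `E`, `μ > 0` componentwise, and `L[μ] u = b`, then
`F(μ') = sup_{u'} (bᵀu' − ½ u'ᵀ L[μ'] u')` is differentiable at `μ` with gradient
entries `∂F/∂μ_e = −(w_e/2) ((G u)_e)²`. Here `G = W⁻¹Eᵀ`, `L[μ] = E Diag(μ) G`. -/
theorem joule_energy_gradient {n m : ℕ} (hn : 0 < n) (hm : 0 < m)
    (E : Matrix (Fin n) (Fin m) ℝ) (w : Fin m → ℝ) (hw : ∀ e, 0 < w e)
    (b : Fin n → ℝ)
    (G : Matrix (Fin m) (Fin n) ℝ) (hG : G = (Matrix.diagonal w)⁻¹ * Eᵀ)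
    (hb : ∃ q₀ : Fin m → ℝ, E.mulVec q₀ = b)
    (μ : Fin m → ℝ) (hμ : ∀ e, 0 < μ e)
    (u : Fin n → ℝ) (hu : (E * Matrix.diagonal μ * G).mulVec u = b)
    (F : (Fin m → ℝ) → ℝ)
    (hF : ∀ μ', F μ' = sSup (Set.range fun u' : Fin n → ℝ =>
      b ⬝ᵥ u' - (1/2) * (u' ⬝ᵥ (E * Matrix.diagonal μ' * G).mulVec u'))) :
    HasFDerivAt F
      (∑ e : Fin m, (-(w e / 2) * (G.mulVec u e)^2) •
        (ContinuousLinearMap.proj e : (Fin m → ℝ) →L[ℝ] ℝ)) μ := by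
  have hw' : ∀ e, w e ≠ 0 := fun e => (hw e).ne'
  have hμ' : ∀ e, μ e ≠ 0 := fun e => (hμ e).ne'
  -- the inverse of the diagonal matrix
  have hdiag : (Matrix.diagonal w)⁻¹ = Matrix.diagonal (fun e => (w e)⁻¹) := by
    apply Matrix.inv_eq_right_inv
    have h1 : (fun e => w e * (w e)⁻¹) = fun _ => (1:ℝ) :=
      funext fun e => mul_inv_cancel₀ (hw' e)
    rw [Matrix.diagonal_mul_diagonal, h1, Matrix.diagonal_one]
  -- action of G
  have hGv : ∀ (v : Fin n → ℝ) (e : Fin m),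
      G.mulVec v e = (w e)⁻¹ * Eᵀ.mulVec v e := by
    intro v e
    rw [hG, hdiag, ← Matrix.mulVec_mulVec, Matrix.mulVec_diagonal]
  -- quadratic form computation
  have hquad : ∀ (x : Fin m → ℝ) (v : Fin n → ℝ),
      v ⬝ᵥ (E * Matrix.diagonal x * G).mulVec v
        = ∑ e, x e * (w e)⁻¹ * (Eᵀ.mulVec v e)^2 := by
    intro x v
    rw [← Matrix.mulVec_mulVec, ← Matrix.mulVec_mulVec, Matrix.dotProduct_mulVec,
      ← Matrix.mulVec_transpose]
    unfold dotProduct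
    refine Finset.sum_congr rfl fun e _ => ?_
    rw [Matrix.mulVec_diagonal, hGv]
    ring
  -- the flow `f e = μ e * (G u) e` satisfies `E f = b`
  have hEf : E.mulVec (fun e => μ e * G.mulVec u e) = b := by
    have hdv : (Matrix.diagonal μ) *ᵥ (G *ᵥ u) = fun e => μ e * (G *ᵥ u) e :=
      funext fun e => Matrix.mulVec_diagonal μ _ e
    rw [← hu, ← Matrix.mulVec_mulVec, ← Matrix.mulVec_mulVec, hdv]
  -- linear part
  have hlin : ∀ v : Fin n → ℝ,
      b ⬝ᵥ v = ∑ e, (μ e * G.mulVec u e) * Eᵀ.mulVec v e := by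
    intro v
    rw [dotProduct_comm, ← hEf, Matrix.dotProduct_mulVec, ← Matrix.mulVec_transpose]
    unfold dotProduct
    refine Finset.sum_congr rfl fun e _ => ?_
    ring
  -- the upper bound function
  set g : (Fin m → ℝ) → ℝ :=
    fun x => ∑ e, (w e * (G.mulVec u e)^2 * (μ e)^2 / 2) * (x e)⁻¹ with hgdef
  -- each value of the objective is at most `g x`
  have hub : ∀ x : Fin m → ℝ, (∀ e, 0 < x e) → ∀ v : Fin n → ℝ,
      b ⬝ᵥ v - (1/2) * (v ⬝ᵥ (E * Matrix.diagonal x * G).mulVec v) ≤ g x := by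
    intro x hx v
    rw [hlin v, hquad x v, hgdef, Finset.mul_sum, ← Finset.sum_sub_distrib]
    refine Finset.sum_le_sum fun e _ => ?_
    have hxe := hx e
    have hwe := hw e
    have hid : (w e * (G.mulVec u e)^2 * (μ e)^2 / 2) * (x e)⁻¹
        - ((μ e * G.mulVec u e) * Eᵀ.mulVec v e - 1/2 * (x e * (w e)⁻¹ * (Eᵀ.mulVec v e)^2))
        = (x e * Eᵀ.mulVec v e - w e * (μ e * G.mulVec u e))^2 / (2 * w e * x e) := by
      field_simp
      ring
    nlinarith [sq_nonneg (x e * Eᵀ.mulVec v e - w e * (μ e * G.mulVec u e)),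
      div_nonneg (sq_nonneg (x e * Eᵀ.mulVec v e - w e * (μ e * G.mulVec u e)))
        (by positivity : (0:ℝ) ≤ 2 * w e * x e)]
  -- the value of the objective at `u`
  have hy : ∀ e, Eᵀ.mulVec u e = w e * G.mulVec u e := by
    intro e
    rw [hGv u e, ← mul_assoc, mul_inv_cancel₀ (hw' e), one_mul]
  set ℓ : (Fin m → ℝ) → ℝ :=
    fun x => b ⬝ᵥ u - (1/2) * ∑ e, x e * (w e * (G.mulVec u e)^2) with hldef
  have hφu : ∀ x : Fin m → ℝ,
      b ⬝ᵥ u - (1/2) * (u ⬝ᵥ (E * Matrix.diagonal x * G).mulVec u) = ℓ x := by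
    intro x
    rw [hquad x u, hldef]
    congr 1
    congr 1
    refine Finset.sum_congr rfl fun e _ => ?_
    rw [hy e]
    field_simp [hw' e]
  -- lower bound on F
  have hbdd : ∀ x : Fin m → ℝ, (∀ e, 0 < x e) → BddAbove (Set.range fun u' : Fin n → ℝ =>
      b ⬝ᵥ u' - (1/2) * (u' ⬝ᵥ (E * Matrix.diagonal x * G).mulVec u')) := by
    intro x hx
    exact ⟨g x, by rintro _ ⟨v, rfl⟩; exact hub x hx v⟩
  have hlb : ∀ x : Fin m → ℝ, (∀ e, 0 < x e) → ℓ x ≤ F x := by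
    intro x hx
    rw [hF x, ← hφu x]
    exact le_csSup (hbdd x hx) ⟨u, rfl⟩
  have hub' : ∀ x : Fin m → ℝ, (∀ e, 0 < x e) → F x ≤ g x := by
    intro x hx
    rw [hF x]
    refine csSup_le (Set.range_nonempty _) ?_
    rintro _ ⟨v, rfl⟩
    exact hub x hx v
  -- value identities at μ
  have hSμ : b ⬝ᵥ u = ∑ e, μ e * (w e * (G.mulVec u e)^2) := by
    have h1 : b ⬝ᵥ u = u ⬝ᵥ b := dotProduct_comm b u
    rw [h1, ← hu, hquad μ u]
    refine Finset.sum_congr rfl fun e _ => ?_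
    rw [hy e]
    field_simp [hw' e]
  have hℓg : ℓ μ = g μ := by
    simp only [hldef, hgdef]
    rw [hSμ, Finset.mul_sum, ← Finset.sum_sub_distrib]
    refine Finset.sum_congr rfl fun e _ => ?_
    linear_combination (-(w e * (G.mulVec u e)^2 * μ e)/2) * mul_inv_cancel₀ (hμ' e)
  have hFμl : F μ = ℓ μ := by
    refine le_antisymm ?_ (hlb μ hμ)
    rw [hℓg]
    exact hub' μ hμ
  -- the candidate derivative
  set D : (Fin m → ℝ) →L[ℝ] ℝ :=
    ∑ e : Fin m, (-(w e / 2) * (G.mulVec u e)^2) •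
      (ContinuousLinearMap.proj e : (Fin m → ℝ) →L[ℝ] ℝ) with hDdef
  have hDapp : ∀ v : Fin m → ℝ, D v = ∑ e, (-(w e / 2) * (G.mulVec u e)^2) * v e := by
    intro v
    rw [hDdef]
    simp [ContinuousLinearMap.sum_apply, ContinuousLinearMap.smul_apply,
      ContinuousLinearMap.proj_apply, smul_eq_mul]
  -- derivative of ℓ
  have hℓ' : HasFDerivAt ℓ D μ := by
    have heq : ℓ = fun x => b ⬝ᵥ u + D x := by
      funext x
      simp only [hldef]
      rw [hDapp]
      rw [Finset.mul_sum, sub_eq_add_neg, ← Finset.sum_neg_distrib]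
      congr 1
      refine Finset.sum_congr rfl fun e _ => ?_
      ring
    rw [heq]
    exact (D.hasFDerivAt (x := μ)).const_add (b ⬝ᵥ u)
  -- derivative of g
  have hg' : HasFDerivAt g D μ := by
    rw [hgdef, hDdef]
    refine HasFDerivAt.fun_sum fun e _ => ?_
    have hinner : HasFDerivAt (fun x : Fin m → ℝ => x e)
        (ContinuousLinearMap.proj e : (Fin m → ℝ) →L[ℝ] ℝ) μ :=
      (ContinuousLinearMap.proj e : (Fin m → ℝ) →L[ℝ] ℝ).hasFDerivAt
    have hinv : HasFDerivAt (fun x : Fin m → ℝ => (x e)⁻¹)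
        ((-(μ e ^ 2)⁻¹) • (ContinuousLinearMap.proj e : (Fin m → ℝ) →L[ℝ] ℝ)) μ :=
      (hasDerivAt_inv (hμ' e)).comp_hasFDerivAt μ hinner
    have h := hinv.const_mul (w e * (G.mulVec u e)^2 * (μ e)^2 / 2)
    refine h.congr_fderiv ?_
    rw [smul_smul]
    congr 1
    field_simp [hμ' e]
  -- squeeze argument
  show HasFDerivAt F D μ
  rw [hasFDerivAt_iff_isLittleO, Asymptotics.isLittleO_iff]
  intro ε hε
  have Hℓ := Asymptotics.isLittleO_iff.1 hℓ'.isLittleO hε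
  have Hg := Asymptotics.isLittleO_iff.1 hg'.isLittleO hε
  have Hpos : ∀ᶠ x in nhds μ, ∀ e, 0 < x e := by
    rw [Filter.eventually_all]
    intro e
    exact ((continuous_apply e).tendsto μ).eventually (eventually_gt_nhds (hμ e))
  filter_upwards [Hℓ, Hg, Hpos] with x h1 h2 hx
  have e1 : ℓ x ≤ F x := hlb x hx
  have e2 : F x ≤ g x := hub' x hx
  rw [Real.norm_eq_abs, abs_le] at h1 h2 ⊢
  constructor
  · nlinarith [h1.1, h1.2, h2.1, h2.2]
  · nlinarith [h1.1, h1.2, h2.1, h2.2]
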